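/- arXiv:1909.07703 — 3 statements merged into one kernel-verified Lean document; each statement's English description precedes it below -/
import Mathlib

section
/- There exists an environment traversable with two robots but not with one: V = {b, u, v, w}, E_M = {[b,u],[u,v],[v,w]}, E_C = {[b,u],[u,v],[v,w],[b,w]} with sensing location w. With one robot, every connected schedule starting at b can never occupy v (a robot at v not adjacent in G_C to b alone is disconnected unless another robot helps), so w is unreachable; with two robots the schedule (b,b),(u,u),(u,v),(u,w) traverses to w maintaining connectivity. -/
def StepOK {V : Type} (GM : SimpleGraph V) {r : ℕ} (p q : Fin r → V) : Prop :=
  ∀ i, p i = q i ∨ GM.Adj (p i) (q i)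

def ConnAt {V : Type} (GC : SimpleGraph V) (b : V) {r : ℕ} (p : Fin r → V) : Prop :=
  ((GC.induce (Set.range p ∪ {b})).Connected)

/-- Movement graph on `V = {b, u, v, w}` (encoded as `0, 1, 2, 3`):
the path `b–u–v–w`. -/
noncomputable def exGM2 : SimpleGraph (Fin 4) :=
  SimpleGraph.fromRel (fun a c => (a = 0 ∧ c = 1) ∨ (a = 1 ∧ c = 2) ∨ (a = 2 ∧ c = 3))

/-- Connectivity graph: edges `b–u`, `u–v`, `v–w`, `b–w`. -/
noncomputable def exGC2 : SimpleGraph (Fin 4) :=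
  SimpleGraph.fromRel (fun a c =>
    (a = 0 ∧ c = 1) ∨ (a = 1 ∧ c = 2) ∨ (a = 2 ∧ c = 3) ∨ (a = 0 ∧ c = 3))

lemma not_conn_at_two (p : Fin 1 → Fin 4) (hp : p 0 = 2) : ¬ ConnAt exGC2 0 p := by
  intro h
  have hr : Set.range p = {2} := by
    ext x; simp [Set.range, Fin.exists_fin_one, hp]
  rw [ConnAt, hr] at h
  have h2 : (2 : Fin 4) ∈ ({2} ∪ {0} : Set (Fin 4)) := by simp
  have h0 : (0 : Fin 4) ∈ ({2} ∪ {0} : Set (Fin 4)) := by simp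
  obtain ⟨wlk⟩ := h.preconnected ⟨2, h2⟩ ⟨0, h0⟩
  cases wlk with
  | cons hadj _ =>
    rename_i b' _
    have hb : b'.val = 0 ∨ b'.val = 2 := by
      have := b'.property; simpa using this
    have : exGC2.Adj 2 b'.val := hadj
    rcases hb with hb | hb <;> rw [hb] at this <;>
      simp [exGC2, SimpleGraph.fromRel_adj] at this

lemma gm_nbr (a c : Fin 4) (h : exGM2.Adj a c) :
    (a = 0 → c = 1) ∧ (a = 1 → c = 0 ∨ c = 2) := by
  fin_cases a <;> fin_cases c <;> simp_all [exGM2, SimpleGraph.fromRel_adj]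

lemma connS (S : Set (Fin 4)) (h0 : (0 : Fin 4) ∈ S)
    (h : ∀ x (hx : x ∈ S), (exGC2.induce S).Reachable ⟨x, hx⟩ ⟨0, h0⟩) :
    (exGC2.induce S).Connected := by
  rw [SimpleGraph.connected_iff]
  exact ⟨fun a b => (h a.1 a.2).trans (h b.1 b.2).symm, ⟨⟨0, h0⟩⟩⟩

lemma gc01 : exGC2.Adj 0 1 := by simp [exGC2, SimpleGraph.fromRel_adj]
lemma gc12 : exGC2.Adj 1 2 := by simp [exGC2, SimpleGraph.fromRel_adj]
lemma gc03 : exGC2.Adj 0 3 := by simp [exGC2, SimpleGraph.fromRel_adj]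

lemma reach10 (S : Set (Fin 4)) (h1 : (1 : Fin 4) ∈ S) (h0 : (0 : Fin 4) ∈ S) :
    (SimpleGraph.induce S exGC2).Reachable ⟨1, h1⟩ ⟨0, h0⟩ :=
  SimpleGraph.Adj.reachable (by exact gc01.symm)

lemma reach30 (S : Set (Fin 4)) (h3 : (3 : Fin 4) ∈ S) (h0 : (0 : Fin 4) ∈ S) :
    (SimpleGraph.induce S exGC2).Reachable ⟨3, h3⟩ ⟨0, h0⟩ :=
  SimpleGraph.Adj.reachable (by exact gc03.symm)

lemma reach20 (S : Set (Fin 4)) (h1 : (1 : Fin 4) ∈ S) (h2 : (2 : Fin 4) ∈ S)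
    (h0 : (0 : Fin 4) ∈ S) :
    (SimpleGraph.induce S exGC2).Reachable ⟨2, h2⟩ ⟨0, h0⟩ := by
  have r1 : (SimpleGraph.induce S exGC2).Reachable ⟨2, h2⟩ ⟨1, h1⟩ :=
    SimpleGraph.Adj.reachable (by exact gc12.symm)
  exact r1.trans (reach10 S h1 h0)



/-- the environment `V = {b, u, v, w}`, `E_M = {bu, uv, vw}`,
`E_C = {bu, uv, vw, bw}` with sensing location `w` can be traversed with two
robots but not with one: no connected single-robot schedule starting at `b`
ever reaches `w`, while two robots admit a connected schedule
`(b,b), (u,u), (u,v), (u,w)` in which a robot reaches `w`. -/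
theorem stmt8 :
    (∀ p : ℕ → Fin 1 → Fin 4,
      (p 0 = fun _ => 0) →
      (∀ t, StepOK exGM2 (p t) (p (t + 1))) →
      (∀ t, ConnAt exGC2 0 (p t)) →
      ∀ t i, p t i ≠ 3) ∧
    (∃ (T : ℕ) (p : ℕ → Fin 2 → Fin 4),
      (p 0 = fun _ => 0) ∧
      (∀ t < T, StepOK exGM2 (p t) (p (t + 1))) ∧
      (∀ t ≤ T, ConnAt exGC2 0 (p t)) ∧
      (∃ t ≤ T, ∃ i, p t i = 3)) := by
  constructor
  · intro p h0 hstep hconn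
    have key : ∀ t, p t 0 = 0 ∨ p t 0 = 1 := by
      intro t
      induction t with
      | zero => left; rw [h0]
      | succ t ih =>
        rcases hstep t 0 with he | ha
        · rw [← he]; exact ih
        · have h2 : p (t + 1) 0 ≠ 2 := fun h =>
            not_conn_at_two (p (t + 1)) h (hconn (t + 1))
          rcases ih with h1 | h1 <;> rw [h1] at ha
          · right; exact (gm_nbr _ _ ha).1 rfl
          · rcases (gm_nbr _ _ ha).2 rfl with h | h
            · left; exact h
            · exact absurd h h2
    intro t i h
    have hi : i = 0 := Subsingleton.elim _ _
    rcases key t with hk | hk <;> rw [hi, hk] at h <;> exact absurd h (by decide)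
  · refine ⟨3, fun t => if t = 0 then ![0, 0] else if t = 1 then ![1, 1]
      else if t = 2 then ![1, 2] else ![1, 3], ?_, ?_, ?_, ?_⟩
    · funext i; fin_cases i <;> simp
    · intro t ht
      interval_cases t <;> intro i <;> fin_cases i <;>
        simp [StepOK, exGM2, SimpleGraph.fromRel_adj]
    · intro t ht
      have hrange : ∀ (a b : Fin 4), Set.range ![a, b] = {a, b} := by
        intro a b; ext x
        simp [Set.range, Fin.exists_fin_two]
        tauto
      interval_cases t <;> (simp only [ConnAt]; norm_num [hrange]) <;>
        apply connS _ (by simp) <;> intro x hx <;> fin_cases x <;>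
        first
          | (exfalso; revert hx; norm_num [hrange, Fin.ext_iff]; done)
          | exact SimpleGraph.Reachable.refl _
          | exact reach10 _ hx _
          | exact reach30 _ hx _
          | exact reach20 _ (by norm_num [hrange]) hx _
    · exact ⟨3, le_refl 3, 1, by norm_num⟩
end

section
/- If a multiset {s_1,…,s_α} of positive integers admits a partition into two subsets each summing to r = (1/2)Σ s_i, then the corresponding d-CMPSTT star instance (base b with β children v_1,…,v_α, A(v_i) = s_i robots required per partition, A(b) = 0, zero relays, unit travel time Δ = 1 between b and each v_i, and unit coverage time Γ(v_i,·) = 1) admits a visiting schedule with worst idleness WI = 6: visit one half of the partitions concurrently, retreat to b, visit the other half, retreat, and repeat. -/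
/-- A cyclic schedule for the star d-CMPSTT instance (base `b` with children
`v_1, …, v_α`, unit travel time `Δ ≡ 1`, unit coverage time `Γ ≡ 1`, no
relays): in phase `t` (taking 3 time steps: travel, cover, return) the
partitions in `assign t` are visited concurrently; partition `i` is covered at
time `3t + 2` of phase `t`. -/
def coversAt {α : ℕ} (assign : ℕ → Finset (Fin α)) (i : Fin α) (τ : ℕ) : Prop :=
  ∃ t, τ = 3 * t + 2 ∧ i ∈ assign t

/-- Feasibility: in each phase the robots assigned (each partition `i` needs
`A(v_i) = s i` robots) do not exceed the `r` available robots. -/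
def Feasible {α : ℕ} (s : Fin α → ℕ) (r : ℕ) (assign : ℕ → Finset (Fin α)) : Prop :=
  ∀ t, ∑ i ∈ assign t, s i ≤ r

/-- Worst idleness at most `W`: every time window of length `W` contains a
coverage of every partition. -/
def IdleLE {α : ℕ} (assign : ℕ → Finset (Fin α)) (W : ℕ) : Prop :=
  ∀ (i : Fin α) (τ : ℕ), ∃ τ', τ ≤ τ' ∧ τ' < τ + W ∧ coversAt assign i τ'

/-- if the multiset `{s_1, …, s_α}` of positive integers admits a
partition into two subsets, each summing to `r = (1/2) Σ s_i`, then the star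
d-CMPSTT instance (`A(v_i) = s i`, unit travel and coverage times, no relays)
admits a feasible schedule with worst idleness `6`: visit one half of the
partitions concurrently, retreat, visit the other half, retreat, and repeat. -/
theorem stmt11 (α r : ℕ) (s : Fin α → ℕ) (hpos : ∀ i, 0 < s i)
    (hsum : ∑ i, s i = 2 * r)
    (hpart : ∃ S₁ : Finset (Fin α), ∑ i ∈ S₁, s i = r ∧ ∑ i ∈ S₁ᶜ, s i = r) :
    ∃ assign : ℕ → Finset (Fin α),
      Feasible s r assign ∧
      (∃ S₁ : Finset (Fin α), (∑ i ∈ S₁, s i = r) ∧ (∑ i ∈ S₁ᶜ, s i = r) ∧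
        ∀ t, assign t = if t % 2 = 0 then S₁ else S₁ᶜ) ∧
      IdleLE assign 6 := by
  obtain ⟨S₁, h1, h2⟩ := hpart
  refine ⟨fun t => if t % 2 = 0 then S₁ else S₁ᶜ, ?_, ⟨S₁, h1, h2, fun t => rfl⟩, ?_⟩
  · intro t
    by_cases h : t % 2 = 0 <;> simp [h, h1, h2]
  · intro i τ
    by_cases hi : i ∈ S₁
    · refine ⟨3 * (2 * ((τ + 3) / 6)) + 2, by omega, by omega,
        2 * ((τ + 3) / 6), rfl, ?_⟩
      have h : (2 * ((τ + 3) / 6)) % 2 = 0 := by omega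
      simp [h, hi]
    · refine ⟨3 * (2 * (τ / 6) + 1) + 2, by omega, by omega,
        2 * (τ / 6) + 1, rfl, ?_⟩
      have h : (2 * (τ / 6) + 1) % 2 = 1 := by omega
      simp [h, hi]
end

section
/- Conversely, in the star d-CMPSTT instance built from a number partition instance (A(v_i) = s_i, r = (1/2)Σ s_i, each partition visited at most twice per cycle), any schedule achieving worst idleness WI ≤ 6 yields an exact partition of {s_1,…,s_α} into two subsets of equal sum r; in particular no partition is visited twice per cycle and no branch receives surplus robots. Hence d-CMPSTT is NP-hard. -/
/-- conversely, in the star d-CMPSTT instance built from a number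
partition instance (`A(v_i) = s i > 0`, `r = (1/2) Σ s_i`), any feasible
schedule achieving worst idleness at most `6` yields an exact partition of
`{s_1, …, s_α}` into two subsets of equal sum `r`. Hence d-CMPSTT is NP-hard. -/
theorem stmt12 (α r : ℕ) (s : Fin α → ℕ) (hpos : ∀ i, 0 < s i)
    (hsum : ∑ i, s i = 2 * r)
    (hsched : ∃ assign : ℕ → Finset (Fin α), Feasible s r assign ∧ IdleLE assign 6) :
    ∃ S₁ : Finset (Fin α), ∑ i ∈ S₁, s i = r ∧ ∑ i ∈ S₁ᶜ, s i = r := by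
  obtain ⟨assign, hfeas, hidle⟩ := hsched
  -- Every partition is covered in the window [0,6), i.e. at time 2 or 5.
  have hcover : ∀ i : Fin α, i ∈ assign 0 ∪ assign 1 := by
    intro i
    obtain ⟨τ', h0, h6, t, hτ, hmem⟩ := hidle i 0
    have ht : t = 0 ∨ t = 1 := by omega
    rcases ht with h | h <;> subst h <;> simp [Finset.mem_union, hmem]
  have huniv : assign 0 ∪ assign 1 = Finset.univ := by
    apply Finset.eq_univ_of_forall hcover
  have h0 : ∑ i ∈ assign 0, s i ≤ r := hfeas 0
  have h1 : ∑ i ∈ assign 1, s i ≤ r := hfeas 1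
  have hge : 2 * r ≤ ∑ i ∈ assign 0, s i + ∑ i ∈ assign 1, s i := by
    calc 2 * r = ∑ i, s i := hsum.symm
    _ = ∑ i ∈ assign 0 ∪ assign 1, s i := by rw [huniv]
    _ ≤ _ := by
      have := Finset.sum_union_inter (s₁ := assign 0) (s₂ := assign 1) (f := s)
      omega
  have heq0 : ∑ i ∈ assign 0, s i = r := by omega
  refine ⟨assign 0, heq0, ?_⟩
  have := Finset.sum_add_sum_compl (assign 0) s
  omega
end
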